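/- If G is a triangle-free finite simple graph, then all roots of the clique polynomial C(G,x) = 1 + n x + m x^2 (where n = |V(G)|, m = |E(G)|) are real. -/

import Mathlib

set_option maxHeartbeats 1000000

open scoped Classical
open Polynomial

/-- The number of `i`-cliques of a finite simple graph. -/
noncomputable def cliqueCount {V : Type*} [Fintype V] (G : SimpleGraph V) (i : ℕ) : ℕ :=
  (G.cliqueFinset i).card

/-- The clique polynomial `C(G,x) = ∑ᵢ cᵢ(G) xⁱ` of a finite simple graph. -/
noncomputable def cliquePoly {V : Type*} [Fintype V] (G : SimpleGraph V) : Polynomial ℝ :=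
  ∑ i ∈ Finset.range (Fintype.card V + 1), (cliqueCount G i : ℝ) • Polynomial.X ^ i

lemma cc0 {V : Type*} [Fintype V] (G : SimpleGraph V) : (G.cliqueFinset 0).card = 1 := by
  have : G.cliqueFinset 0 = {∅} := by
    ext s; simp [SimpleGraph.mem_cliqueFinset_iff, SimpleGraph.isNClique_zero]
  simp [this]

lemma cc1 {V : Type*} [Fintype V] (G : SimpleGraph V) :
    (G.cliqueFinset 1).card = Fintype.card V := by
  have : G.cliqueFinset 1 = Finset.univ.image ({·}) := by
    ext s; simp [SimpleGraph.mem_cliqueFinset_iff, SimpleGraph.isNClique_one, eq_comm]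
  rw [this, Finset.card_image_of_injective _ (fun a b h => by simpa using h), Finset.card_univ]

lemma cc2 {V : Type*} [Fintype V] (G : SimpleGraph V) :
    (G.cliqueFinset 2).card = G.edgeFinset.card := by
  classical
  let f : Sym2 V → Finset V := Sym2.lift ⟨fun a b => ({a, b} : Finset V), fun a b => Finset.pair_comm a b⟩
  have himg : G.cliqueFinset 2 = G.edgeFinset.image f := by
    ext s
    simp only [SimpleGraph.mem_cliqueFinset_iff, Finset.mem_image,
      SimpleGraph.mem_edgeFinset]
    constructor
    · rintro ⟨hc, h2⟩
      obtain ⟨a, b, hab, rfl⟩ := Finset.card_eq_two.1 h2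
      have hadj : G.Adj a b := hc (by simp) (by simp) hab
      exact ⟨s(a, b), hadj, rfl⟩
    · rintro ⟨e, he, rfl⟩
      induction e with
      | h a b =>
        have hadj : G.Adj a b := he
        constructor
        · intro x hx y hy hxy
          simp only [f, Sym2.lift_mk, Finset.coe_insert, Finset.coe_singleton,
            Set.mem_insert_iff, Set.mem_singleton_iff] at hx hy
          rcases hx with rfl | rfl <;> rcases hy with rfl | rfl <;>
            first | exact absurd rfl hxy | exact hadj | exact hadj.symm
        · simp [f, Finset.card_insert_of_notMem, hadj.ne]
  rw [himg, Finset.card_image_of_injOn]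
  intro e he e' he' hee
  induction e with
  | h a b =>
    induction e' with
    | h c d =>
      simp only [f, Sym2.lift_mk] at hee
      have hab : a ≠ b := (G.mem_edgeSet.1 (SimpleGraph.mem_edgeFinset.1 he)).ne
      have : a = c ∧ b = d ∨ a = d ∧ b = c := by
        have h1 : a ∈ ({c, d} : Finset V) := hee ▸ (by simp)
        have h2 : b ∈ ({c, d} : Finset V) := hee ▸ (by simp)
        simp only [Finset.mem_insert, Finset.mem_singleton] at h1 h2
        rcases h1 with rfl | rfl <;> rcases h2 with rfl | rfl
        · exact absurd rfl hab
        · exact Or.inl ⟨rfl, rfl⟩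
        · exact Or.inr ⟨rfl, rfl⟩
        · exact absurd rfl hab
      rcases this with ⟨rfl, rfl⟩ | ⟨rfl, rfl⟩
      · rfl
      · exact Sym2.eq_swap

lemma mantel {V : Type*} [Fintype V] (G : SimpleGraph V) (hG : G.CliqueFree 3) :
    4 * G.edgeFinset.card ≤ Fintype.card V ^ 2 := by
  classical
  set n := Fintype.card V
  set m := G.edgeFinset.card with hm_def
  have hdeg : ∀ u v, G.Adj u v → G.degree u + G.degree v ≤ n := by
    intro u v huv
    have hdisj : Disjoint (G.neighborFinset u) (G.neighborFinset v) := by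
      rw [Finset.disjoint_left]
      intro w hwu hwv
      rw [SimpleGraph.mem_neighborFinset] at hwu hwv
      exact hG {u, v, w} (SimpleGraph.is3Clique_triple_iff.2 ⟨huv, hwu, hwv⟩)
    calc G.degree u + G.degree v
        = ((G.neighborFinset u) ∪ (G.neighborFinset v)).card := by
          rw [Finset.card_union_of_disjoint hdisj]; rfl
      _ ≤ n := Finset.card_le_univ _
  have hfil : ∀ u, G.neighborFinset u = Finset.univ.filter (G.Adj u) := by
    intro u; ext v; simp [SimpleGraph.mem_neighborFinset]
  have hswap : ∀ f : V → ℕ, (∑ u, ∑ v ∈ G.neighborFinset u, f v) = ∑ v, G.degree v * f v := by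
    intro f
    simp_rw [hfil, Finset.sum_filter]
    rw [Finset.sum_comm]
    congr 1
    ext v
    have : ∀ u, (if G.Adj u v then f v else 0) = if u ∈ Finset.univ.filter (G.Adj v) then f v else 0 := by
      intro u; simp [G.adj_comm]
    simp_rw [this]
    rw [Finset.sum_ite_mem, Finset.univ_inter, Finset.sum_const, smul_eq_mul]
    congr 1
    rw [← hfil]
    rfl
  have hds : (∑ v, G.degree v) = 2 * m := SimpleGraph.sum_degrees_eq_twice_card_edges G
  have hsq : (∑ v, G.degree v ^ 2) ≤ n * m := by
    have h1 : (∑ u, ∑ v ∈ G.neighborFinset u, (G.degree u + G.degree v))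
        ≤ ∑ u, ∑ _v ∈ G.neighborFinset u, n := by
      apply Finset.sum_le_sum; intro u _
      apply Finset.sum_le_sum; intro v hv
      exact hdeg u v (by rwa [SimpleGraph.mem_neighborFinset] at hv)
    have h2 : (∑ u, ∑ _v ∈ G.neighborFinset u, n) = 2 * (n * m) := by
      simp only [Finset.sum_const, smul_eq_mul]
      rw [← Finset.sum_mul]
      simp only [SimpleGraph.card_neighborFinset_eq_degree]
      rw [hds]; ring
    have h3 : (∑ u, ∑ v ∈ G.neighborFinset u, (G.degree u + G.degree v))
        = 2 * ∑ v, G.degree v ^ 2 := by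
      simp_rw [Finset.sum_add_distrib]
      rw [hswap (fun v => G.degree v)]
      have hc : ∀ u, (∑ _v ∈ G.neighborFinset u, G.degree u) = G.degree u * G.degree u := by
        intro u
        rw [Finset.sum_const, smul_eq_mul, SimpleGraph.card_neighborFinset_eq_degree]
      simp_rw [hc, sq, two_mul]
    have : 2 * (∑ v, G.degree v ^ 2) ≤ 2 * (n * m) := h3 ▸ (h1.trans h2.le)
    exact Nat.le_of_mul_le_mul_left this (by norm_num)
  have hcs : (2 * m) ^ 2 ≤ n * ∑ v, G.degree v ^ 2 := by
    have h := sq_sum_le_card_mul_sum_sq (s := (Finset.univ : Finset V))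
      (f := fun v => (G.degree v : ℤ))
    rw [Finset.card_univ] at h
    have h2 : ((2 * m : ℕ) : ℤ) ^ 2 ≤ (n : ℤ) * ∑ v, (G.degree v : ℤ) ^ 2 := by
      rw [show ((2 * m : ℕ) : ℤ) = ∑ v, (G.degree v : ℤ) by push_cast [← hds]; simp]
      exact h
    exact_mod_cast h2
  have key : 4 * m ^ 2 ≤ n ^ 2 * m := by
    calc 4 * m ^ 2 = (2 * m) ^ 2 := by ring
      _ ≤ n * ∑ v, G.degree v ^ 2 := hcs
      _ ≤ n * (n * m) := Nat.mul_le_mul_left n hsq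
      _ = n ^ 2 * m := by ring
  rcases Nat.eq_zero_or_pos m with hm | hm
  · simp [hm]
  · exact Nat.le_of_mul_le_mul_right
      (by calc 4 * m * m = 4 * m ^ 2 := by ring
        _ ≤ n ^ 2 * m := key) hm

/-- For a triangle-free graph, the clique polynomial `1 + n x + m x²` has only real roots. -/
theorem stmt_4 {V : Type*} [Fintype V] (G : SimpleGraph V) (hG : G.CliqueFree 3) :
    (cliquePoly G = 1 + (Fintype.card V : ℝ) • Polynomial.X
        + (G.edgeFinset.card : ℝ) • Polynomial.X ^ 2) ∧
      ∀ z : ℂ, Polynomial.aeval z (cliquePoly G) = 0 → ∃ r : ℝ, z = (r : ℂ) := by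
  have hzero : ∀ i, 3 ≤ i → cliqueCount G i = 0 := by
    intro i hi
    rw [cliqueCount, Finset.card_eq_zero, SimpleGraph.cliqueFinset_eq_empty_iff]
    exact hG.mono hi
  have hbig : ∀ i, Fintype.card V < i → cliqueCount G i = 0 := by
    intro i hi
    rw [cliqueCount, Finset.card_eq_zero, SimpleGraph.cliqueFinset_eq_empty_iff]
    exact SimpleGraph.cliqueFree_of_card_lt hi
  set N := max (Fintype.card V + 1) 3 with hN
  have hpoly : cliquePoly G = 1 + (Fintype.card V : ℝ) • Polynomial.X
      + (G.edgeFinset.card : ℝ) • Polynomial.X ^ 2 := by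
    have e1 : cliquePoly G = ∑ i ∈ Finset.range N,
        (cliqueCount G i : ℝ) • (Polynomial.X : Polynomial ℝ) ^ i := by
      rw [cliquePoly]
      refine Finset.sum_subset (f := fun i => (cliqueCount G i : ℝ) • (Polynomial.X : Polynomial ℝ) ^ i)
        (Finset.range_subset_range.2 (le_max_left _ _)) fun i _ hi => ?_
      rw [Finset.mem_range, not_lt] at hi
      rw [hbig i (by omega), Nat.cast_zero, zero_smul]
    have e2 : (∑ i ∈ Finset.range 3, (cliqueCount G i : ℝ) • (Polynomial.X : Polynomial ℝ) ^ i)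
        = ∑ i ∈ Finset.range N, (cliqueCount G i : ℝ) • (Polynomial.X : Polynomial ℝ) ^ i := by
      refine Finset.sum_subset (f := fun i => (cliqueCount G i : ℝ) • (Polynomial.X : Polynomial ℝ) ^ i)
        (Finset.range_subset_range.2 (le_max_right _ _)) fun i _ hi => ?_
      rw [Finset.mem_range, not_lt] at hi
      rw [hzero i hi, Nat.cast_zero, zero_smul]
    rw [e1, ← e2]
    rw [Finset.sum_range_succ, Finset.sum_range_succ, Finset.sum_range_one]
    rw [cliqueCount, cliqueCount, cliqueCount, cc0, cc1, cc2]
    simp [pow_zero]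
  refine ⟨hpoly, ?_⟩
  intro z hz
  rw [hpoly] at hz
  set n := Fintype.card V with hn
  set m := G.edgeFinset.card with hm
  have hz' : 1 + (n : ℂ) * z + (m : ℂ) * z ^ 2 = 0 := by
    simpa [Algebra.smul_def, mul_comm] using hz
  rcases Nat.eq_zero_or_pos m with hm0 | hm0
  · -- linear case
    have hn0 : n ≠ 0 := by
      rintro h0
      rw [hm0, h0] at hz'
      simp at hz'
    refine ⟨-(1 / (n : ℝ)), ?_⟩
    have : (n : ℂ) * z = -1 := by
      rw [hm0] at hz'; push_cast at hz'; linear_combination hz'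
    have hnC : (n : ℂ) ≠ 0 := Nat.cast_ne_zero.2 hn0
    push_cast
    field_simp
    linear_combination this
  · -- quadratic case
    have hd : (0 : ℝ) ≤ (n : ℝ) ^ 2 - 4 * m := by
      have := mantel G hG
      have : (4 * m : ℝ) ≤ (n : ℝ) ^ 2 := by exact_mod_cast this
      linarith
    set s := Real.sqrt ((n : ℝ) ^ 2 - 4 * m) with hs
    have hs2 : s ^ 2 = (n : ℝ) ^ 2 - 4 * m := Real.sq_sqrt hd
    have hmR : (m : ℝ) ≠ 0 := Nat.cast_ne_zero.2 hm0.ne'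
    have hmC : (m : ℂ) ≠ 0 := Nat.cast_ne_zero.2 hm0.ne'
    set r1 : ℝ := (-(n : ℝ) + s) / (2 * m) with hr1
    set r2 : ℝ := (-(n : ℝ) - s) / (2 * m) with hr2
    have hfac : (m : ℂ) * (z - (r1 : ℂ)) * (z - (r2 : ℂ)) = 0 := by
      have hs2C : ((s : ℂ)) ^ 2 = ((n : ℂ)) ^ 2 - 4 * m := by exact_mod_cast congrArg (Complex.ofReal) hs2
      rw [hr1, hr2]
      push_cast
      field_simp
      linear_combination (4 * (m:ℂ)) * hz' - hs2C
    rcases mul_eq_zero.1 hfac with h | h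
    · rcases mul_eq_zero.1 h with h' | h'
      · exact absurd h' hmC
      · exact ⟨r1, by linear_combination h'⟩
    · exact ⟨r2, by linear_combination h⟩
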